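/- Recurrence relationship: for m ∈ ℕ, m ≥ 1, 𝔊_{n,q}^{(α)}(1/m, y) + ∑_{k=0}^n [n choose k]_q (1/m - 1)_q^{n-k} 𝔊_{k,q}^{(α)}(0,y) = 2[n]_q ∑_{k=0}^{n-1} [n-1 choose k]_q (1/m - 1)_q^{n-1-k} 𝔊_{k,q}^{(α-1)}(0,y), where (a+b)_q^m := ∑_{j=0}^m [m choose j]_q q^{j(j-1)/2} a^{m-j} b^j with a = 1/m, b = -1. -/

import Mathlib

open PowerSeries Finset

/-- The `q`-integer `[n]_q = 1 + q + ⋯ + q^(n-1)`. -/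
noncomputable def qInt (q : ℂ) (n : ℕ) : ℂ := ∑ i ∈ Finset.range n, q ^ i

/-- The `q`-factorial `[n]_q!`. -/
noncomputable def qFact (q : ℂ) : ℕ → ℂ
  | 0 => 1
  | n + 1 => qFact q n * qInt q (n + 1)

/-- The Gaussian (`q`-binomial) coefficient. -/
noncomputable def qBinom (q : ℂ) (n k : ℕ) : ℂ := qFact q n / (qFact q k * qFact q (n - k))

/-- The formal power series `e_q(tx) = ∑ x^n t^n/[n]_q!`. -/
noncomputable def qExpSeries (q : ℂ) (x : ℂ) : PowerSeries ℂ :=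
  PowerSeries.mk fun n => x ^ n / qFact q n

/-- The formal power series `E_q(ty) = ∑ q^(n(n-1)/2) y^n t^n/[n]_q!`. -/
noncomputable def qExpSeries' (q : ℂ) (y : ℂ) : PowerSeries ℂ :=
  PowerSeries.mk fun n => q ^ (n * (n - 1) / 2) * y ^ n / qFact q n

/-- Generating series `(2t/(e_q(t)+1))^α e_q(tx) E_q(ty)` of the `q`-Genocchi polynomials. -/
noncomputable def qGenocchiSeries (q : ℂ) (α : ℕ) (x y : ℂ) : PowerSeries ℂ :=
  (PowerSeries.C 2 * PowerSeries.X * (qExpSeries q 1 + 1)⁻¹) ^ α *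
    qExpSeries q x * qExpSeries' q y

/-- The `q`-Genocchi polynomial `𝔊_{n,q}^{(α)}(x,y)`. -/
noncomputable def qGenocchi (q : ℂ) (α : ℕ) (x y : ℂ) (n : ℕ) : ℂ :=
  qFact q n * PowerSeries.coeff n (qGenocchiSeries q α x y)

/-- The `q`-Bernoulli polynomial `𝔅_{n,q}(x,y)`, defined via
`(t/(e_q(t)-1)) e_q(tx) E_q(ty) = ∑ 𝔅_{n,q}(x,y) t^n/[n]_q!`
(note `t/(e_q(t)-1)` is the inverse of the series `∑ t^n/[n+1]_q!`). -/
noncomputable def qBernoulli (q : ℂ) (x y : ℂ) (n : ℕ) : ℂ :=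
  qFact q n * PowerSeries.coeff n
    ((PowerSeries.mk fun k => (qFact q (k + 1))⁻¹)⁻¹ * qExpSeries q x * qExpSeries' q y)

/-- The Gauss polynomial `(x+y)_q^n = ∑_k [n k]_q q^(k(k-1)/2) x^(n-k) y^k`. -/
noncomputable def qAddPow (q : ℂ) (x y : ℂ) (n : ℕ) : ℂ :=
  ∑ k ∈ Finset.range (n + 1), qBinom q n k * q ^ (k * (k - 1) / 2) * x ^ (n - k) * y ^ k

section Aux

variable (q : ℂ)

lemma qFact_succ (n : ℕ) : qFact q (n + 1) = qFact q n * qInt q (n + 1) := rfl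

lemma qFact_ne_zero (hq : ∀ n : ℕ, qInt q (n + 1) ≠ 0) : ∀ n, qFact q n ≠ 0
  | 0 => one_ne_zero
  | n + 1 => mul_ne_zero (qFact_ne_zero hq n) (hq n)

lemma qInt_zero : qInt q 0 = 0 := by simp [qInt]

lemma qInt_add (k m : ℕ) : qInt q (k + m) = qInt q k + q ^ k * qInt q m := by
  simp [qInt, Finset.sum_range_add, Finset.mul_sum, pow_add]

lemma tri_succ (k : ℕ) : k * (k - 1) / 2 + k = (k + 1) * k / 2 := by
  cases k with
  | zero => rfl
  | succ m =>
    have h : (m + 2) * (m + 1) = (m + 1) * m + 2 * (m + 1) := by ring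
    rw [h, Nat.add_mul_div_left _ _ (by norm_num : 0 < 2)]
    simp

/-- The Gauss binomial identity: `e_q(ta) E_q(tb)` has coefficients `(a+b)_q^n/[n]_q!`. -/
lemma coeff_qExp_mul (hq : ∀ n : ℕ, qInt q (n + 1) ≠ 0) (a b : ℂ) (n : ℕ) :
    PowerSeries.coeff n (qExpSeries q a * qExpSeries' q b) = qAddPow q a b n / qFact q n := by
  have hF := qFact_ne_zero q hq
  rw [PowerSeries.coeff_mul, Finset.Nat.sum_antidiagonal_eq_sum_range_succ_mk]
  rw [qAddPow, ← Finset.sum_range_reflect, Finset.sum_div]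
  refine Finset.sum_congr rfl fun k hk => ?_
  have hk' : k ≤ n := by simpa [Nat.lt_succ_iff] using hk
  have h1 : n + 1 - 1 - k = n - k := by omega
  have h2 : n - (n - k) = k := by omega
  rw [h1, qExpSeries, qExpSeries', PowerSeries.coeff_mk, PowerSeries.coeff_mk, qBinom]
  show a ^ (n - k) / qFact q (n - k)
        * (q ^ ((n - (n - k)) * ((n - (n - k)) - 1) / 2) * b ^ (n - (n - k))
          / qFact q (n - (n - k)))
      = qFact q n / (qFact q k * qFact q (n - k)) * q ^ (k * (k - 1) / 2) * a ^ (n - k) * b ^ k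
        / qFact q n
  rw [h2]
  have e1 := hF k
  have e2 := hF (n - k)
  have e3 := hF n
  field_simp

lemma qAddPow_one_negone (hq : ∀ n : ℕ, qInt q (n + 1) ≠ 0) (n : ℕ) :
    qAddPow q 1 (-1) (n + 1) = 0 := by
  have hF := qFact_ne_zero q hq
  rw [qAddPow]
  have hsplit : ∀ k ∈ Finset.range (n + 2),
      qBinom q (n + 1) k * q ^ (k * (k - 1) / 2) * (1 : ℂ) ^ (n + 1 - k) * (-1 : ℂ) ^ k
        = (qFact q n * qInt q k / (qFact q k * qFact q (n + 1 - k)) * q ^ (k * (k - 1) / 2)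
            * (-1 : ℂ) ^ k)
          + (qFact q n * (q ^ k * qInt q (n + 1 - k)) / (qFact q k * qFact q (n + 1 - k))
            * q ^ (k * (k - 1) / 2) * (-1 : ℂ) ^ k) := by
    intro k hk
    have hk' : k ≤ n + 1 := by simpa [Nat.lt_succ_iff] using hk
    have hInt : qInt q (n + 1) = qInt q k + q ^ k * qInt q (n + 1 - k) := by
      conv_lhs => rw [show n + 1 = k + (n + 1 - k) by omega]
      exact qInt_add q _ _
    rw [qBinom, qFact_succ, hInt, one_pow]
    ring
  rw [Finset.sum_congr rfl hsplit, Finset.sum_add_distrib]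
  rw [Finset.sum_range_succ' (fun k => qFact q n * qInt q k / (qFact q k * qFact q (n + 1 - k))
        * q ^ (k * (k - 1) / 2) * (-1 : ℂ) ^ k) (n + 1)]
  rw [Finset.sum_range_succ (fun k => qFact q n * (q ^ k * qInt q (n + 1 - k))
        / (qFact q k * qFact q (n + 1 - k)) * q ^ (k * (k - 1) / 2) * (-1 : ℂ) ^ k) (n + 1)]
  rw [qInt_zero, Nat.sub_self, qInt_zero]
  simp only [mul_zero, zero_mul, zero_div, add_zero, zero_add, mul_assoc]
  rw [← Finset.sum_add_distrib]
  refine Finset.sum_eq_zero fun k hk => ?_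
  have hk' : k ≤ n := by simpa [Nat.lt_succ_iff] using hk
  have h1 : n + 1 - (k + 1) = n - k := by omega
  have h2 : n + 1 - k = (n - k) + 1 := by omega
  have h3 : (k + 1) * ((k + 1) - 1) / 2 = k * (k - 1) / 2 + k := by
    rw [tri_succ]; simp
  rw [h1, h2, h3, qFact_succ q k, qFact_succ q (n - k), pow_succ (-1 : ℂ) k, pow_add]
  have e1 : qInt q (k + 1) ≠ 0 := hq k
  have e2 : qInt q (n - k + 1) ≠ 0 := hq (n - k)
  have e3 : qFact q k ≠ 0 := hF k
  have e4 : qFact q (n - k) ≠ 0 := hF (n - k)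
  field_simp
  ring

lemma qExp_mul_qExp'_negone (hq : ∀ n : ℕ, qInt q (n + 1) ≠ 0) :
    qExpSeries q 1 * qExpSeries' q (-1) = 1 := by
  ext n
  cases n with
  | zero =>
    simp [PowerSeries.coeff_mul, qExpSeries, qExpSeries', qFact]
  | succ n =>
    rw [coeff_qExp_mul q hq, qAddPow_one_negone q hq, zero_div, PowerSeries.coeff_one,
      if_neg (Nat.succ_ne_zero n)]

lemma sum_qBinom_eq (hq : ∀ n : ℕ, qInt q (n + 1) ≠ 0) (a : ℂ) (H : PowerSeries ℂ) (n : ℕ) :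
    ∑ k ∈ Finset.range (n + 1),
        qBinom q n k * qAddPow q a (-1) (n - k) * (qFact q k * PowerSeries.coeff k H)
      = qFact q n * PowerSeries.coeff n ((qExpSeries q a * qExpSeries' q (-1)) * H) := by
  have hF := qFact_ne_zero q hq
  rw [PowerSeries.coeff_mul, Finset.Nat.sum_antidiagonal_eq_sum_range_succ_mk, Finset.mul_sum]
  conv_rhs => rw [← Finset.sum_range_reflect]
  refine Finset.sum_congr rfl fun k hk => ?_
  have hk' : k ≤ n := by simpa [Nat.lt_succ_iff] using hk
  have h1 : n + 1 - 1 - k = n - k := by omega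
  have h2 : n - (n - k) = k := by omega
  rw [h1, h2, coeff_qExp_mul q hq]
  have hkk : qBinom q n k * qFact q k = qFact q n / qFact q (n - k) := by
    rw [qBinom]
    have e1 := hF k
    have e2 := hF (n - k)
    have e3 := hF n
    field_simp
  linear_combination (qAddPow q a (-1) (n - k) * PowerSeries.coeff k H) * hkk

lemma qExpSeries_zero : qExpSeries q 0 = 1 := by
  ext n
  cases n with
  | zero => simp [qExpSeries, qFact]
  | succ n => simp [qExpSeries, PowerSeries.coeff_one]

lemma qGenocchiSeries_succ_id (hq : ∀ n : ℕ, qInt q (n + 1) ≠ 0) (β : ℕ) (a y : ℂ) :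
    qGenocchiSeries q (β + 1) a y
        + (qExpSeries q a * qExpSeries' q (-1)) * qGenocchiSeries q (β + 1) 0 y
      = PowerSeries.X * (PowerSeries.C 2
          * ((qExpSeries q a * qExpSeries' q (-1)) * qGenocchiSeries q β 0 y)) := by
  have hc : PowerSeries.constantCoeff (qExpSeries q 1 + 1) ≠ 0 := by
    have h0 : PowerSeries.constantCoeff (qExpSeries q 1) = 1 := by
      simp [qExpSeries, qFact]
    rw [map_add, h0, map_one]
    norm_num
  have hinv : (qExpSeries q 1 + 1) * (qExpSeries q 1 + 1)⁻¹ = 1 :=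
    PowerSeries.mul_inv_cancel _ hc
  have hkey : qExpSeries q 1 * qExpSeries' q (-1) = 1 := qExp_mul_qExp'_negone q hq
  simp only [qGenocchiSeries, qExpSeries_zero]
  linear_combination
    (PowerSeries.C 2 * PowerSeries.X * qExpSeries' q (-1)
        * ((PowerSeries.C 2 * PowerSeries.X * (qExpSeries q 1 + 1)⁻¹) ^ β
          * qExpSeries q a * qExpSeries' q y)) * hinv
      - (PowerSeries.C 2 * PowerSeries.X * (qExpSeries q 1 + 1)⁻¹
        * ((PowerSeries.C 2 * PowerSeries.X * (qExpSeries q 1 + 1)⁻¹) ^ β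
          * qExpSeries q a * qExpSeries' q y)) * hkey

end Aux

/-- Recurrence relationship for the `q`-Genocchi polynomials. -/
theorem qGenocchi_recurrence (q : ℂ) (hq : ∀ n : ℕ, qInt q (n + 1) ≠ 0)
    (α : ℕ) (hα : 1 ≤ α) (m : ℕ) (hm : 1 ≤ m) (n : ℕ) (y : ℂ) :
    qGenocchi q α ((m : ℂ)⁻¹) y n +
      ∑ k ∈ Finset.range (n + 1),
        qBinom q n k * qAddPow q ((m : ℂ)⁻¹) (-1) (n - k) * qGenocchi q α 0 y k =
    2 * qInt q n *
      ∑ k ∈ Finset.range n,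
        qBinom q (n - 1) k * qAddPow q ((m : ℂ)⁻¹) (-1) (n - 1 - k) *
          qGenocchi q (α - 1) 0 y k := by

  have hF := qFact_ne_zero q hq
  obtain ⟨β, rfl⟩ : ∃ β, α = β + 1 := ⟨α - 1, by omega⟩
  have hs : β + 1 - 1 = β := rfl
  have hL : qGenocchi q (β + 1) ((m : ℂ)⁻¹) y n +
      ∑ k ∈ Finset.range (n + 1),
        qBinom q n k * qAddPow q ((m : ℂ)⁻¹) (-1) (n - k) * qGenocchi q (β + 1) 0 y k
      = qFact q n * PowerSeries.coeff n (PowerSeries.X * (PowerSeries.C 2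
          * ((qExpSeries q ((m : ℂ)⁻¹) * qExpSeries' q (-1)) * qGenocchiSeries q β 0 y))) := by
    simp only [qGenocchi]
    rw [sum_qBinom_eq q hq, ← mul_add, ← map_add, qGenocchiSeries_succ_id q hq]
  rw [hs, hL]
  cases n with
  | zero =>
    simp [qInt_zero, qFact, PowerSeries.coeff_zero_eq_constantCoeff, map_mul]
  | succ n =>
    rw [PowerSeries.coeff_succ_X_mul, PowerSeries.coeff_C_mul]
    simp only [qGenocchi, Nat.add_sub_cancel]
    rw [sum_qBinom_eq q hq ((m : ℂ)⁻¹) (qGenocchiSeries q β 0 y) n, qFact_succ]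
    ring
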